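/- For f μ-strongly convex and differentiable with L-Lipschitz gradient, and constant step size 0 < α ≤ 1/L, the full (deterministic) proximal gradient iteration x_{k+1} = Prox_{αλ‖·‖₁}(x_k − α∇f(x_k)) satisfies ‖x_{k+1} − x*‖₂² ≤ (1 − αμ)‖x_k − x*‖₂², where x* is the unique minimizer of F(x) = f(x) + λ‖x‖₁. -/

import Mathlib

open scoped RealInnerProductSpace

lemma soft_sq_le (c a b : ℝ) (hc : 0 ≤ c) :
    ((if a > c then a - c else if a < -c then a + c else 0) -
     (if b > c then b - c else if b < -c then b + c else 0))^2 ≤ (a - b)^2 := by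
  split_ifs <;> nlinarith

lemma nonpos_of_forall_small (b C δ : ℝ) (hδ : 0 < δ)
    (h : ∀ ε, 0 < ε → ε < δ → b ≤ C * ε) : b ≤ 0 := by
  by_contra hb
  push_neg at hb
  rcases le_or_gt C 0 with hC | hC
  · have := h (δ/2) (by linarith) (by linarith)
    nlinarith
  · have hε : 0 < min (δ/2) (b/(2*C)) := lt_min (by linarith) (by positivity)
    have h1 := h _ hε (lt_of_le_of_lt (min_le_left _ _) (by linarith))
    have h2 : C * min (δ/2) (b/(2*C)) ≤ C * (b/(2*C)) :=
      mul_le_mul_of_nonneg_left (min_le_right _ _) hC.le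
    have h3 : C * (b/(2*C)) = b/2 := by field_simp
    linarith

lemma descent_lemma {n : ℕ} (f : EuclideanSpace ℝ (Fin n) → ℝ)
    (grad : EuclideanSpace ℝ (Fin n) → EuclideanSpace ℝ (Fin n))
    (hgrad : ∀ x, HasGradientAt f (grad x) x)
    (L : ℝ)
    (hlip : ∀ x y, ‖grad x - grad y‖ ≤ L * ‖x - y‖)
    (x y : EuclideanSpace ℝ (Fin n)) :
    f y ≤ f x + ⟪grad x, y - x⟫ + L / 2 * ‖y - x‖ ^ 2 := by
  set v := y - x with hv
  set c1 := ⟪grad x, v⟫ with hc1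
  set N := ‖v‖ ^ 2 with hN
  set φ : ℝ → ℝ := fun t => f (x + t • v) - t * c1 - L / 2 * t ^ 2 * N with hφdef
  have hA : ∀ t : ℝ, HasDerivAt (fun s : ℝ => f (x + s • v)) ⟪grad (x + t • v), v⟫ t := by
    intro t
    have hline : HasDerivAt (fun s : ℝ => x + s • v) v t := by
      simpa using ((hasDerivAt_id t).smul_const v).const_add x
    have hfd : HasFDerivAt f (InnerProductSpace.toDual ℝ _ (grad (x + t • v))) (x + t • v) :=
      hasGradientAt_iff_hasFDerivAt.mp (hgrad (x + t • v))
    have h := hfd.comp_hasDerivAt t hline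
    simp only [InnerProductSpace.toDual_apply_apply] at h
    exact h
  have hφ : ∀ t : ℝ, HasDerivAt φ (⟪grad (x + t • v), v⟫ - c1 - L * t * N) t := by
    intro t
    have hB : HasDerivAt (fun t : ℝ => t * c1) c1 t := hasDerivAt_mul_const c1
    have hC : HasDerivAt (fun t : ℝ => L / 2 * t ^ 2 * N) (L * t * N) t := by
      have := ((hasDerivAt_pow 2 t).const_mul (L / 2)).mul_const N
      convert this using 1
      · rfl
      · rfl
      push_cast
      ring
    exact ((hA t).sub hB).sub hC
  have hdiff : Differentiable ℝ φ := fun t => (hφ t).differentiableAt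
  have hanti : AntitoneOn φ (Set.Icc (0:ℝ) 1) := by
    apply antitoneOn_of_deriv_nonpos (convex_Icc (0:ℝ) 1) hdiff.continuous.continuousOn
      (fun t _ => (hdiff t).differentiableWithinAt)
    intro t ht
    rw [interior_Icc] at ht
    rw [(hφ t).deriv]
    have h1 : ⟪grad (x + t • v), v⟫ - c1 = ⟪grad (x + t • v) - grad x, v⟫ := by
      rw [inner_sub_left]
    have h2 := real_inner_le_norm (grad (x + t • v) - grad x) v
    have h3 := hlip (x + t • v) x
    rw [add_sub_cancel_left, norm_smul, Real.norm_eq_abs, abs_of_pos ht.1] at h3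
    have h4 : ‖grad (x + t • v) - grad x‖ * ‖v‖ ≤ L * (t * ‖v‖) * ‖v‖ :=
      mul_le_mul_of_nonneg_right h3 (norm_nonneg v)
    have h5 : ‖v‖ * ‖v‖ = N := (sq ‖v‖).symm
    have h6 : L * (t * ‖v‖) * ‖v‖ = L * t * N := by rw [← h5]; ring
    linarith
  have h01 := hanti (Set.left_mem_Icc.mpr zero_le_one) (Set.right_mem_Icc.mpr zero_le_one)
    zero_le_one
  have hφ0 : φ 0 = f x := by simp [hφdef]
  have hφ1 : φ 1 = f y - c1 - L / 2 * N := by simp [hφdef, hv]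
  rw [hφ0, hφ1] at h01
  linarith

set_option maxHeartbeats 1000000 in
/-- linear contraction of the deterministic proximal gradient
    iteration for strongly convex `f` with Lipschitz gradient. -/
theorem prox_grad_linear_contraction (n : ℕ) (f : EuclideanSpace ℝ (Fin n) → ℝ)
    (grad : EuclideanSpace ℝ (Fin n) → EuclideanSpace ℝ (Fin n))
    (hgrad : ∀ x, HasGradientAt f (grad x) x)
    (μ L : ℝ) (hμ : 0 < μ) (hL : 0 < L)
    (hsc : ∀ x y : EuclideanSpace ℝ (Fin n),
      f x + inner ℝ (grad x) (y - x) + (μ / 2) * ‖y - x‖ ^ 2 ≤ f y)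
    (hlip : ∀ x y, ‖grad x - grad y‖ ≤ L * ‖x - y‖)
    (lam : ℝ) (hlam : 0 < lam)
    (xs : EuclideanSpace ℝ (Fin n))
    (hxsmin : ∀ x : EuclideanSpace ℝ (Fin n),
      f xs + lam * ∑ i, |xs i| ≤ f x + lam * ∑ i, |x i|)
    (α : ℝ) (hα : 0 < α) (hαL : α ≤ 1 / L)
    (xk : EuclideanSpace ℝ (Fin n)) :
    let xk1 : EuclideanSpace ℝ (Fin n) :=
      WithLp.toLp 2 (fun i => if (xk - α • grad xk) i > α * lam then (xk - α • grad xk) i - α * lam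
               else if (xk - α • grad xk) i < -(α * lam) then (xk - α • grad xk) i + α * lam
               else 0)
    ‖xk1 - xs‖ ^ 2 ≤ (1 - α * μ) * ‖xk - xs‖ ^ 2 := by
  intro xk1
  have hxk1 : ∀ i, xk1 i =
      (if (xk - α • grad xk) i > α * lam then (xk - α • grad xk) i - α * lam
       else if (xk - α • grad xk) i < -(α * lam) then (xk - α • grad xk) i + α * lam
       else 0) := fun i => rfl
  have hαlam : (0:ℝ) ≤ α * lam := by positivity
  have hαL' : α * L ≤ 1 := by
    rw [le_div_iff₀ hL] at hαL
    exact hαL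
  have hconv : ∀ x y : EuclideanSpace ℝ (Fin n), f x + ⟪grad x, y - x⟫ ≤ f y := by
    intro x y
    have := hsc x y
    nlinarith [sq_nonneg ‖y - x‖]
  have hdes := descent_lemma f grad hgrad L hlip
  -- "half" cocoercivity inequality
  have hhalf : ∀ x y : EuclideanSpace ℝ (Fin n),
      f x + ⟪grad x, y - x⟫ + 1/(2*L) * ‖grad y - grad x‖^2 ≤ f y := by
    intro x y
    set Δ := grad y - grad x with hΔ
    set z := y - (1/L) • Δ with hz
    have hA := hconv x z
    have hB := hdes y z
    have e1 : z - y = -((1/L) • Δ) := by rw [hz]; abel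
    have e2 : ⟪grad y, z - y⟫ = -(1/L * ⟪grad y, Δ⟫) := by
      rw [e1, inner_neg_right, real_inner_smul_right]
    have e3 : ‖z - y‖^2 = (1/L)^2 * ‖Δ‖^2 := by
      rw [e1, norm_neg, norm_smul, Real.norm_eq_abs, mul_pow, sq_abs]
    have e4 : z - x = (y - x) - (1/L) • Δ := by rw [hz]; abel
    have e5 : ⟪grad x, z - x⟫ = ⟪grad x, y - x⟫ - 1/L * ⟪grad x, Δ⟫ := by
      rw [e4, inner_sub_right, real_inner_smul_right]
    rw [e2, e3] at hB
    rw [e5] at hA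
    have e6 : ⟪grad y, Δ⟫ - ⟪grad x, Δ⟫ = ‖Δ‖^2 := by
      rw [← inner_sub_left, ← hΔ, real_inner_self_eq_norm_sq]
    have e7 : L/2 * ((1/L)^2 * ‖Δ‖^2) = 1/(2*L) * ‖Δ‖^2 := by
      field_simp
      try ring
    have e8 : 1/L * ⟪grad y, Δ⟫ - 1/L * ⟪grad x, Δ⟫ = 1/L * ‖Δ‖^2 := by
      rw [← mul_sub, e6]
    have e9 : 1/L * ‖Δ‖^2 - 1/(2*L) * ‖Δ‖^2 = 1/(2*L) * ‖Δ‖^2 := by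
      field_simp
      try ring
    linarith
  -- cocoercivity (Baillon–Haddad)
  have hcoco : ∀ x y : EuclideanSpace ℝ (Fin n),
      ‖grad x - grad y‖^2 ≤ L * ⟪grad x - grad y, x - y⟫ := by
    intro x y
    have h1 := hhalf x y
    have h2 := hhalf y x
    have e0 : ‖grad x - grad y‖ = ‖grad y - grad x‖ := norm_sub_rev _ _
    have e3 : ⟪grad x - grad y, x - y⟫ = -⟪grad x, y - x⟫ - ⟪grad y, x - y⟫ := by
      rw [inner_sub_left, show (x - y : EuclideanSpace ℝ (Fin n)) = -(y - x) by abel,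
        inner_neg_right]
      try ring
      try rfl
    rw [e0]
    have hsum : ⟪grad x, y - x⟫ + ⟪grad y, x - y⟫ + 1/L * ‖grad y - grad x‖^2 ≤ 0 := by
      have e0' : ‖grad x - grad y‖ = ‖grad y - grad x‖ := norm_sub_rev _ _
      rw [e0'] at h2
      have : 1/(2*L) * ‖grad y - grad x‖^2 + 1/(2*L) * ‖grad y - grad x‖^2
          = 1/L * ‖grad y - grad x‖^2 := by field_simp; try ring
      linarith
    have h4 : 1/L * ‖grad y - grad x‖^2 ≤ ⟪grad x - grad y, x - y⟫ := by
      rw [e3]; linarith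
    have h5 := mul_le_mul_of_nonneg_left h4 hL.le
    have h6 : L * (1/L * ‖grad y - grad x‖^2) = ‖grad y - grad x‖^2 := by
      field_simp
      try ring
    linarith
  -- strong monotonicity
  have hmono : ∀ x y : EuclideanSpace ℝ (Fin n),
      μ * ‖x - y‖^2 ≤ ⟪grad x - grad y, x - y⟫ := by
    intro x y
    have h1 := hsc x y
    have h2 := hsc y x
    have e3 : ⟪grad x - grad y, x - y⟫ = -⟪grad x, y - x⟫ - ⟪grad y, x - y⟫ := by
      rw [inner_sub_left, show (x - y : EuclideanSpace ℝ (Fin n)) = -(y - x) by abel,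
        inner_neg_right]
      try ring
      try rfl
    have e4 : ‖y - x‖ = ‖x - y‖ := norm_sub_rev _ _
    rw [e4] at h1
    rw [e3]
    linarith
  -- forward-step contraction
  have hfw : ‖(xk - α • grad xk) - (xs - α • grad xs)‖^2 ≤ (1 - α*μ) * ‖xk - xs‖^2 := by
    have e1 : (xk - α • grad xk) - (xs - α • grad xs)
        = (xk - xs) - α • (grad xk - grad xs) := by
      rw [smul_sub]; abel
    rw [e1]
    have hexp : ‖(xk - xs) - α • (grad xk - grad xs)‖^2
        = ‖xk - xs‖^2 - 2 * (α * ⟪xk - xs, grad xk - grad xs⟫)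
          + α^2 * ‖grad xk - grad xs‖^2 := by
      rw [norm_sub_sq_real, real_inner_smul_right, norm_smul, mul_pow, Real.norm_eq_abs, sq_abs]
    rw [hexp]
    have hm := hmono xk xs
    have hc := hcoco xk xs
    have hib : ⟪xk - xs, grad xk - grad xs⟫ = ⟪grad xk - grad xs, xk - xs⟫ :=
      real_inner_comm _ _
    have hT0 : 0 ≤ ⟪grad xk - grad xs, xk - xs⟫ :=
      le_trans (by positivity) hm
    have h7 : α^2 * ‖grad xk - grad xs‖^2 ≤ α^2 * (L * ⟪grad xk - grad xs, xk - xs⟫) :=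
      mul_le_mul_of_nonneg_left hc (by positivity)
    have h8 : α^2 * L ≤ α := by nlinarith
    have h9 : α^2 * (L * ⟪grad xk - grad xs, xk - xs⟫) ≤ α * ⟪grad xk - grad xs, xk - xs⟫ := by
      rw [← mul_assoc]
      exact mul_le_mul_of_nonneg_right h8 hT0
    have h10 : α * (μ * ‖xk - xs‖^2) ≤ α * ⟪grad xk - grad xs, xk - xs⟫ :=
      mul_le_mul_of_nonneg_left hm hα.le
    rw [hib]
    nlinarith
  -- coordinatewise optimality inequality at xs
  have hkey : ∀ (i : Fin n) (t : ℝ),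
      0 ≤ t * grad xs i + L/2 * t^2 + lam * (|xs i + t| - |xs i|) := by
    intro i t
    set e : EuclideanSpace ℝ (Fin n) := EuclideanSpace.single i (1:ℝ) with he
    have h1 := hxsmin (xs + t • e)
    have h2 := hdes xs (xs + t • e)
    have e1 : (xs + t • e) - xs = t • e := add_sub_cancel_left xs (t • e)
    rw [e1] at h2
    have e2 : ⟪grad xs, t • e⟫ = t * grad xs i := by
      rw [real_inner_smul_right, he, EuclideanSpace.inner_single_right]
      simp
    have e3 : ‖t • e‖^2 = t^2 := by
      rw [norm_smul, he, EuclideanSpace.norm_single, norm_one, Real.norm_eq_abs, mul_one, sq_abs]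
    rw [e2, e3] at h2
    have e4 : ∑ j, |(xs + t • e) j| = (∑ j, |xs j|) + (|xs i + t| - |xs i|) := by
      have hval : ∀ j, (xs + t • e) j = xs j + (if j = i then t else 0) := by
        intro j
        rw [PiLp.add_apply, PiLp.smul_apply, he, EuclideanSpace.single_apply, smul_eq_mul,
          mul_ite, mul_one, mul_zero]
      calc ∑ j, |(xs + t • e) j|
          = ∑ j, (|xs j| + if j = i then |xs i + t| - |xs i| else 0) := by
            apply Finset.sum_congr rfl
            intro j _
            rw [hval j]
            by_cases hj : j = i
            · subst hj; simp
            · simp [hj]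
        _ = (∑ j, |xs j|) + (|xs i + t| - |xs i|) := by
            rw [Finset.sum_add_distrib, Finset.sum_ite_eq' Finset.univ i
              (fun _ => |xs i + t| - |xs i|)]
            simp
    rw [e4] at h1
    nlinarith
  -- xs is a fixed point of the prox-gradient map, coordinatewise
  have hfix : ∀ i : Fin n,
      (if (xs - α • grad xs) i > α * lam then (xs - α • grad xs) i - α * lam
       else if (xs - α • grad xs) i < -(α * lam) then (xs - α • grad xs) i + α * lam
       else 0) = xs i := by
    intro i
    have hui : (xs - α • grad xs) i = xs i - α * grad xs i := by
      rw [PiLp.sub_apply, PiLp.smul_apply, smul_eq_mul]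
    rcases lt_trichotomy (xs i) 0 with hneg | hzero | hpos
    · -- xs i < 0 : grad xs i = lam
      have hup : lam - grad xs i ≤ 0 := by
        apply nonpos_of_forall_small _ (L/2) (-(xs i)) (by linarith)
        intro ε hε1 hε2
        have hk := hkey i ε
        have ha1 : |xs i + ε| = -(xs i + ε) := abs_of_neg (by linarith)
        have ha2 : |xs i| = -(xs i) := abs_of_neg hneg
        rw [ha1, ha2] at hk
        have : ε * (lam - grad xs i) ≤ ε * (L/2 * ε) := by nlinarith
        exact le_of_mul_le_mul_left this hε1
      have hdown : grad xs i - lam ≤ 0 := by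
        apply nonpos_of_forall_small _ (L/2) (-(xs i)) (by linarith)
        intro ε hε1 hε2
        have hk := hkey i (-ε)
        have ha1 : |xs i + -ε| = -(xs i + -ε) := abs_of_neg (by linarith)
        have ha2 : |xs i| = -(xs i) := abs_of_neg hneg
        rw [ha1, ha2] at hk
        have : ε * (grad xs i - lam) ≤ ε * (L/2 * ε) := by nlinarith
        exact le_of_mul_le_mul_left this hε1
      have hg : grad xs i = lam := by linarith
      rw [hui, hg]
      rw [if_neg (by nlinarith), if_pos (by nlinarith)]
      ring
    · -- xs i = 0 : |grad xs i| ≤ lam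
      have hub : grad xs i - lam ≤ 0 := by
        apply nonpos_of_forall_small _ (L/2) 1 one_pos
        intro ε hε1 _
        have hk := hkey i (-ε)
        rw [hzero] at hk
        have ha1 : |(0:ℝ) + -ε| = ε := by rw [zero_add, abs_neg, abs_of_pos hε1]
        rw [ha1] at hk
        simp only [abs_zero] at hk
        have : ε * (grad xs i - lam) ≤ ε * (L/2 * ε) := by nlinarith
        exact le_of_mul_le_mul_left this hε1
      have hlb : -(grad xs i) - lam ≤ 0 := by
        apply nonpos_of_forall_small _ (L/2) 1 one_pos
        intro ε hε1 _
        have hk := hkey i ε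
        rw [hzero] at hk
        have ha1 : |(0:ℝ) + ε| = ε := by rw [zero_add, abs_of_pos hε1]
        rw [ha1] at hk
        simp only [abs_zero] at hk
        have : ε * (-(grad xs i) - lam) ≤ ε * (L/2 * ε) := by nlinarith
        exact le_of_mul_le_mul_left this hε1
      rw [hui, hzero]
      rw [if_neg (by nlinarith), if_neg (by nlinarith)]
    · -- xs i > 0 : grad xs i = -lam
      have hup : grad xs i + lam ≤ 0 := by
        apply nonpos_of_forall_small _ (L/2) (xs i) hpos
        intro ε hε1 hε2
        have hk := hkey i (-ε)
        have ha1 : |xs i + -ε| = xs i + -ε := abs_of_pos (by linarith)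
        have ha2 : |xs i| = xs i := abs_of_pos hpos
        rw [ha1, ha2] at hk
        have : ε * (grad xs i + lam) ≤ ε * (L/2 * ε) := by nlinarith
        exact le_of_mul_le_mul_left this hε1
      have hdown : -(grad xs i + lam) ≤ 0 := by
        apply nonpos_of_forall_small _ (L/2) (xs i) hpos
        intro ε hε1 hε2
        have hk := hkey i ε
        have ha1 : |xs i + ε| = xs i + ε := abs_of_pos (by linarith)
        have ha2 : |xs i| = xs i := abs_of_pos hpos
        rw [ha1, ha2] at hk
        have : ε * (-(grad xs i + lam)) ≤ ε * (L/2 * ε) := by nlinarith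
        exact le_of_mul_le_mul_left this hε1
      have hg : grad xs i = -lam := by linarith
      rw [hui, hg]
      rw [if_pos (by nlinarith)]
      ring
  -- assemble
  have hnormsq : ∀ z : EuclideanSpace ℝ (Fin n), ‖z‖^2 = ∑ i, (z i)^2 := by
    intro z
    rw [EuclideanSpace.norm_eq, Real.sq_sqrt (Finset.sum_nonneg fun i _ => sq_nonneg _)]
    simp [Real.norm_eq_abs, sq_abs]
  have hstep : ‖xk1 - xs‖^2 ≤ ‖(xk - α • grad xk) - (xs - α • grad xs)‖^2 := by
    rw [hnormsq, hnormsq]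
    apply Finset.sum_le_sum
    intro i _
    rw [PiLp.sub_apply, PiLp.sub_apply, hxk1 i, ← hfix i]
    exact soft_sq_le (α * lam) _ _ hαlam
  exact le_trans hstep hfw
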